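/- Triangle augmentation, forward direction: let (G, rk) be an SRTI instance and let G' arise from G by adding, for each vertex v ∈ V(G), two new vertices v' and v'' together with edges {v,v'}, {v,v''}, {v',v''}, with ranks rk_v(v') = α_v + 1 and rk_v(v'') = α_v + 2 where α_v = max over w ∈ N_G(v) of rk_v(w), and rk_{v'}(v) = 2, rk_{v'}(v'') = 1, rk_{v''}(v) = 1, rk_{v''}(v') = 2. If G has a perfect stable matching, then G' has a stable matching (namely, the perfect stable matching of G together with all edges {v', v''}). -/

import Mathlib

open scoped Classical

noncomputable section

/-- A matching of a graph `G`, given by the partner function: `partner v = v` means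
that `v` is unmatched, and otherwise `v` is matched to `partner v`, which must be one
of its neighbours in the acceptability graph `G`. -/
structure Matching {V : Type} (G : SimpleGraph V) where
  partner : V → V
  involutive : ∀ v, partner (partner v) = v
  adj_of_ne : ∀ v, partner v ≠ v → G.Adj v (partner v)

/-- The set of edges of a matching. -/
def Matching.edgeSet {V : Type} {G : SimpleGraph V} (M : Matching G) : Set (Sym2 V) :=
  {e | ∃ v, M.partner v ≠ v ∧ e = s(v, M.partner v)}

/-- The pair `{v, w}` is blocking for the matching `M` (with respect to the rank
functions `rk`, where `rk v w = ⊤` encodes that `v` prefers any acceptable partner to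
`w`; in particular `rk v v = ⊤`, so that an unmatched agent prefers every neighbour to
staying alone): `v` and `w` are adjacent, and each strictly prefers the other to its
current situation. -/
def IsBlocking {V : Type} (G : SimpleGraph V) (rk : V → V → ℕ∞) (M : Matching G)
    (v w : V) : Prop :=
  G.Adj v w ∧ rk v w < rk v (M.partner v) ∧ rk w v < rk w (M.partner w)

/-- A matching is stable if no edge of `G` is blocking. -/
def Stable {V : Type} (G : SimpleGraph V) (rk : V → V → ℕ∞) (M : Matching G) : Prop :=
  ∀ v w : V, ¬ IsBlocking G rk M v w
/-- The graph `G'` obtained from `G` by adding, for each vertex `v`, two new vertices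
`v' = .inr (.inl v)` and `v'' = .inr (.inr v)` together with the triangle edges
`{v,v'}`, `{v,v''}` and `{v',v''}`. -/
def triGraph {V : Type} (G : SimpleGraph V) : SimpleGraph (V ⊕ V ⊕ V) where
  Adj a b :=
    match a, b with
    | Sum.inl v, Sum.inl w => G.Adj v w
    | Sum.inl v, Sum.inr (Sum.inl w) => v = w
    | Sum.inl v, Sum.inr (Sum.inr w) => v = w
    | Sum.inr (Sum.inl v), Sum.inl w => v = w
    | Sum.inr (Sum.inr v), Sum.inl w => v = w
    | Sum.inr (Sum.inl v), Sum.inr (Sum.inr w) => v = w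
    | Sum.inr (Sum.inr v), Sum.inr (Sum.inl w) => v = w
    | _, _ => False
  symm := by
    constructor
    rintro (v | v | v) (w | w | w) h
    · exact h.symm
    · exact h.symm
    · exact h.symm
    · exact h.symm
    · exact h
    · exact h.symm
    · exact h.symm
    · exact h.symm
    · exact h
  loopless := by
    constructor
    rintro (v | v | v) h
    · exact G.irrefl h
    · exact h
    · exact h

/-- The largest rank that `v` assigns to a neighbour in `G`. -/
def maxRank {V : Type} (G : SimpleGraph V) (rk : V → V → ℕ∞) (v : V) : ℕ∞ :=
  ⨆ w ∈ G.neighborSet v, rk v w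

/-- The ranks for the triangle-augmented instance: writing `α_v` for the largest rank
`v` assigns to a neighbour in `G`, we set `rk_v(v') = α_v + 1`, `rk_v(v'') = α_v + 2`,
`rk_{v'}(v) = 2`, `rk_{v'}(v'') = 1`, `rk_{v''}(v) = 1` and `rk_{v''}(v') = 2`;
all other (non-adjacent) pairs get rank `⊤`. -/
def triRank {V : Type} [DecidableEq V] (G : SimpleGraph V) (rk : V → V → ℕ∞) :
    (V ⊕ V ⊕ V) → (V ⊕ V ⊕ V) → ℕ∞
  | Sum.inl v, Sum.inl w => rk v w
  | Sum.inl v, Sum.inr (Sum.inl w) => if v = w then maxRank G rk v + 1 else ⊤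
  | Sum.inl v, Sum.inr (Sum.inr w) => if v = w then maxRank G rk v + 2 else ⊤
  | Sum.inr (Sum.inl v), Sum.inl w => if v = w then 2 else ⊤
  | Sum.inr (Sum.inl v), Sum.inr (Sum.inr w) => if v = w then 1 else ⊤
  | Sum.inr (Sum.inr v), Sum.inl w => if v = w then 1 else ⊤
  | Sum.inr (Sum.inr v), Sum.inr (Sum.inl w) => if v = w then 2 else ⊤
  | _, _ => ⊤
/-- Triangle augmentation, forward direction: if `G` has a perfect
stable matching `M`, then the triangle-augmented instance has a stable matching,
namely `M` together with all the edges `{v', v''}`. -/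
theorem triGraph_stable_of_perfect {V : Type} [Fintype V] [DecidableEq V]
    (G : SimpleGraph V) (rk : V → V → ℕ∞)
    (hself : ∀ v, rk v v = ⊤)
    (hfin : ∀ v w, G.Adj v w → rk v w ≠ ⊤)
    (M : Matching G) (hM : Stable G rk M) (hperf : ∀ v, M.partner v ≠ v) :
    ∃ M' : Matching (triGraph G),
      Stable (triGraph G) (triRank G rk) M' ∧
      M'.partner = Sum.elim (fun v => Sum.inl (M.partner v))
        (Sum.elim (fun v => Sum.inr (Sum.inr v)) (fun v => Sum.inr (Sum.inl v))) := by
  have hkey : ∀ v, rk v (M.partner v) ≤ maxRank G rk v := by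
    intro v
    have hadj : M.partner v ∈ G.neighborSet v := M.adj_of_ne v (hperf v)
    exact le_biSup (fun w => rk v w) hadj
  refine ⟨⟨Sum.elim (fun v => Sum.inl (M.partner v))
      (Sum.elim (fun v => Sum.inr (Sum.inr v)) (fun v => Sum.inr (Sum.inl v))), ?_, ?_⟩,
    ?_, rfl⟩
  · rintro (v | v | v) <;> simp [M.involutive]
  · rintro (v | v | v) h
    · exact M.adj_of_ne v (fun he => h (by simp [he]))
    · exact rfl
    · exact rfl
  · rintro (v | v | v) (w | w | w) ⟨hadj, h1, h2⟩
    · exact hM v w ⟨hadj, h1, h2⟩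
    · simp only [triGraph] at hadj; subst hadj
      simp only [triRank, if_pos rfl, Matching.partner] at h1
      exact absurd h1 (not_lt.2 ((hkey v).trans le_self_add))
    · simp only [triGraph] at hadj; subst hadj
      simp only [triRank, if_pos rfl, Matching.partner] at h1
      exact absurd h1 (not_lt.2 ((hkey v).trans le_self_add))
    · simp only [triGraph] at hadj; subst hadj
      simp only [triRank, if_pos rfl, Matching.partner] at h1
      exact absurd h1 (by norm_num)
    · exact hadj
    · simp only [triGraph] at hadj; subst hadj
      simp only [triRank, if_pos rfl, Matching.partner] at h1
      exact absurd h1 (by norm_num)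
    · simp only [triGraph] at hadj; subst hadj
      simp only [triRank, if_pos rfl, Matching.partner] at h2
      exact absurd h2 (not_lt.2 ((hkey v).trans le_self_add))
    · simp only [triGraph] at hadj; subst hadj
      simp only [triRank, if_pos rfl, Matching.partner] at h2
      exact absurd h2 (by norm_num)
    · exact hadj

end
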